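/- (Corollary 1.) For all real numbers λ and t, the extended function μ ↦ f_λ(μ, t) is monotonically decreasing (antitone) on ℝ, and if t ≠ 0 it is strictly decreasing on ℝ. -/

import Mathlib

open Real

lemma aux_hasDerivAt (t x : ℝ) :
    HasDerivAt (fun μ : ℝ => Real.exp (-μ * t)) (-t * Real.exp (-x * t)) x := by
  have h1 : HasDerivAt (fun μ : ℝ => -μ * t) (-t) x := by
    simpa using ((hasDerivAt_id x).neg.mul_const t)
  simpa [mul_comm] using h1.exp

lemma aux_strictConvex (t : ℝ) (ht : t ≠ 0) :
    StrictConvexOn ℝ Set.univ (fun μ : ℝ => Real.exp (-μ * t)) := by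
  apply strictConvexOn_univ_of_deriv2_pos
  · exact (Real.continuous_exp.comp (continuous_id.neg.mul continuous_const))
  · intro x
    have hd : deriv (fun μ : ℝ => Real.exp (-μ * t)) = fun μ : ℝ => -t * Real.exp (-μ * t) := by
      funext y; exact (aux_hasDerivAt t y).deriv
    have hd2 : HasDerivAt (fun μ : ℝ => -t * Real.exp (-μ * t)) (t * t * Real.exp (-x * t)) x := by
      have := (aux_hasDerivAt t x).const_mul (-t)
      exact this.congr_deriv (by ring)
    have : (deriv^[2] (fun μ : ℝ => Real.exp (-μ * t))) x = t * t * Real.exp (-x * t) := by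
      simp only [Function.iterate_succ, Function.iterate_zero, Function.comp_apply, id_eq, hd]
      exact hd2.deriv
    rw [this]
    exact mul_pos (mul_self_pos.mpr ht) (Real.exp_pos _)

lemma aux_strictAnti (l t : ℝ) (ht : t ≠ 0) :
    StrictAnti (fun μ : ℝ =>
      if μ = l then t * Real.exp (-l * t)
      else (Real.exp (-l * t) - Real.exp (-μ * t)) / (μ - l)) := by
  set g : ℝ → ℝ := fun μ => Real.exp (-μ * t) with hg
  have hsc := aux_strictConvex t ht
  have hder : HasDerivAt g (-t * Real.exp (-l * t)) l := aux_hasDerivAt t l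
  intro a b hab
  simp only
  have key : ∀ x : ℝ, x ≠ l → (Real.exp (-l * t) - Real.exp (-x * t)) / (x - l)
      = -slope g l x := by
    intro x hx
    rw [slope_def_field]
    field_simp [sub_ne_zero.mpr hx, hg]
    simp only [hg, neg_mul, mul_comm t x]; ring
  by_cases ha : a = l
  · have hb : b ≠ l := fun h => absurd ((ha.trans h.symm) ▸ hab) (lt_irrefl _)
    rw [if_neg hb, if_pos ha, key b hb]
    have hlt : -t * Real.exp (-l * t) < slope g l b :=
      hsc.lt_slope_of_hasDerivAt (Set.mem_univ _) (Set.mem_univ _) (ha ▸ hab) hder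
    linarith
  · by_cases hb : b = l
    · rw [if_pos hb, if_neg ha, key a ha]
      have hlt : slope g a l < -t * Real.exp (-l * t) :=
        hsc.slope_lt_of_hasDerivAt (Set.mem_univ _) (Set.mem_univ _) (hb ▸ hab) hder
      rw [slope_comm] at hlt
      linarith
    · rw [if_neg ha, if_neg hb, key a ha, key b hb]
      have hlt : slope g l a < slope g l b := by
        rw [slope_def_field, slope_def_field]
        exact hsc.secant_strict_mono (Set.mem_univ _) (Set.mem_univ _) (Set.mem_univ _) ha hb hab
      linarith

theorem stmt_4 (l t : ℝ) :
    Antitone (fun μ : ℝ =>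
      if μ = l then t * Real.exp (-l * t)
      else (Real.exp (-l * t) - Real.exp (-μ * t)) / (μ - l)) ∧
    (t ≠ 0 → StrictAnti (fun μ : ℝ =>
      if μ = l then t * Real.exp (-l * t)
      else (Real.exp (-l * t) - Real.exp (-μ * t)) / (μ - l))) := by
  constructor
  · by_cases ht : t = 0
    · subst ht
      have : (fun μ : ℝ =>
          if μ = l then (0:ℝ) * Real.exp (-l * 0)
          else (Real.exp (-l * 0) - Real.exp (-μ * 0)) / (μ - l)) = fun _ => 0 := by
        funext μ; by_cases h : μ = l <;> simp [h]
      rw [this]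
      exact antitone_const
    · exact (aux_strictAnti l t ht).antitone
  · exact aux_strictAnti l t
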